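/- Let f be a Rockafellian for minimizing φ with anchor ū, and suppose there exists θ̄ ≥ 0 with inf_x f(u,x) ≥ inf_x f(ū,x) − θ̄‖u − ū‖ for all u ∈ ℝ^m, for some norm ‖·‖ on ℝ^m. Then for every θ ≥ θ̄, the function f_θ(u,x) := f(u,x) + θ‖u − ū‖ is a Rockafellian with the same anchor that is exact for ȳ = 0: every minimizer x⋆ of φ yields a minimizer (ū, x⋆) of f_θ. Moreover, if θ > θ̄ and inf_x f(ū,x) is finite, then every minimizer (u⋆,x⋆) of f_θ satisfies u⋆ = ū and x⋆ minimizes φ. -/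

import Mathlib

open Filter Topology

/-- Exactness from calmness. If `inf_x f(u,x) ≥ inf_x f(ū,x) − θ̄‖u − ū‖` for all
`u` (for some norm `N` on `ℝ^m`), then for `θ ≥ θ̄` the function
`f_θ(u,x) = f(u,x) + θ N(u − ū)` is a Rockafellian with the same anchor, exact for `ȳ = 0`;
moreover if `θ > θ̄` and `inf_x f(ū,x)` is finite, every minimizer `(u⋆,x⋆)` of `f_θ`
has `u⋆ = ū` and `x⋆` minimizing `φ`. -/

private lemma aux_sub_le (a b : EReal) (c : ℝ) (h : a - (c:EReal) ≤ b) : a ≤ b + c := by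
  have := add_le_add_left h (c:EReal)
  calc a = a - c + c := by
        rw [sub_eq_add_neg, add_assoc, ← EReal.coe_neg, ← EReal.coe_add]
        simp
    _ ≤ b + c := this

theorem stmt3 {m n : ℕ}
    (φ : EuclideanSpace ℝ (Fin n) → EReal)
    (f : EuclideanSpace ℝ (Fin m) → EuclideanSpace ℝ (Fin n) → EReal)
    (ub : EuclideanSpace ℝ (Fin m))
    (N : EuclideanSpace ℝ (Fin m) → ℝ)
    (hN0 : ∀ u, N u = 0 ↔ u = 0)
    (hNadd : ∀ u₁ u₂, N (u₁ + u₂) ≤ N u₁ + N u₂)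
    (hNsmul : ∀ (c : ℝ) u, N (c • u) = |c| * N u)
    (θb : ℝ) (hθb : 0 ≤ θb)
    (hRock : ∀ x, f ub x = φ x)
    (hcalm : ∀ u : EuclideanSpace ℝ (Fin m),
      (⨅ x, f ub x) - ((θb * N (u - ub) : ℝ) : EReal) ≤ ⨅ x, f u x) :
    ∀ θ : ℝ, θb ≤ θ →
      ((∀ x, f ub x + ((θ * N (ub - ub) : ℝ) : EReal) = φ x) ∧
       (∀ xs, (∀ x, φ xs ≤ φ x) →
          ∀ (u : EuclideanSpace ℝ (Fin m)) (x : EuclideanSpace ℝ (Fin n)),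
            f ub xs + ((θ * N (ub - ub) : ℝ) : EReal) ≤ f u x + ((θ * N (u - ub) : ℝ) : EReal)) ∧
       (θb < θ → (⨅ x, f ub x) ≠ ⊤ → (⨅ x, f ub x) ≠ ⊥ →
          ∀ (us : EuclideanSpace ℝ (Fin m)) (xs : EuclideanSpace ℝ (Fin n)),
            (∀ (u : EuclideanSpace ℝ (Fin m)) (x : EuclideanSpace ℝ (Fin n)),
              f us xs + ((θ * N (us - ub) : ℝ) : EReal) ≤ f u x + ((θ * N (u - ub) : ℝ) : EReal)) →
            us = ub ∧ ∀ x, φ xs ≤ φ x)) := by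
  intro θ hθ
  have hN00 : N 0 = 0 := by
    have := hNsmul 0 0; simpa using this
  have hNneg : ∀ u, 0 ≤ N u := by
    intro u
    have h1 := hNadd u (-u)
    have h2 : N (-u) = N u := by
      have := hNsmul (-1) u; simpa using this
    have : N 0 ≤ N u + N u := by simpa [h2] using h1
    simp [hN00] at this
    linarith
  have hzero : ((θ * N (ub - ub) : ℝ) : EReal) = 0 := by
    simp [hN00]
  have part1 : ∀ x, f ub x + ((θ * N (ub - ub) : ℝ) : EReal) = φ x := by
    intro x; rw [hzero, add_zero, hRock]
  refine ⟨part1, ?_, ?_⟩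
  · intro xs hmin u x
    rw [part1 xs]
    have h1 : φ xs ≤ ⨅ x, f ub x := by
      apply le_iInf; intro x'; rw [hRock]; exact hmin x'
    have h2 : φ xs - ((θb * N (u - ub) : ℝ) : EReal) ≤ ⨅ x', f u x' := by
      calc φ xs - ((θb * N (u - ub) : ℝ) : EReal)
          ≤ (⨅ x, f ub x) - ((θb * N (u - ub) : ℝ) : EReal) := by
            rw [sub_eq_add_neg, sub_eq_add_neg]; exact add_le_add_left h1 _
        _ ≤ ⨅ x', f u x' := hcalm u
    have h3 : φ xs ≤ f u x + ((θb * N (u - ub) : ℝ) : EReal) :=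
      aux_sub_le _ _ _ (h2.trans (iInf_le _ x))
    refine h3.trans (add_le_add_right ?_ _)
    exact_mod_cast mul_le_mul_of_nonneg_right hθ (hNneg _)
  · intro hlt htop hbot us xs hmin
    set I := ⨅ x, f ub x with hI
    set c := N (us - ub) with hc
    have hcI : f us xs + ((θ * c : ℝ) : EReal) ≤ I := by
      apply le_iInf; intro x
      have := hmin ub x
      rw [hzero, add_zero] at this
      exact this
    have hlow : I - ((θb * c : ℝ) : EReal) ≤ f us xs := (hcalm us).trans (iInf_le _ xs)
    have hchain : (I - ((θb * c : ℝ) : EReal)) + ((θ * c : ℝ) : EReal) ≤ I :=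
      (add_le_add_left hlow _).trans hcI
    lift I to ℝ using ⟨htop, hbot⟩ with r
    have : ((r - θb * c + θ * c : ℝ) : EReal) ≤ (r : EReal) := by
      rw [EReal.coe_add, EReal.coe_sub] at *
      exact hchain
    rw [EReal.coe_le_coe_iff] at this
    have hc0 : c = 0 := by
      by_contra h
      have hcpos : 0 < c := lt_of_le_of_ne (hNneg _) (Ne.symm h)
      nlinarith
    have husub : us = ub := by
      have := (hN0 (us - ub)).mp hc0
      exact sub_eq_zero.mp this
    refine ⟨husub, fun x => ?_⟩
    have h2 : ((θ * c : ℝ) : EReal) = 0 := by rw [hc0]; simp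
    have := hmin ub x
    rw [h2, add_zero, hzero, add_zero, husub, hRock xs, hRock x] at this
    exact this
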